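/- Let (Γ,⊑) be an extended modular complex. If (p,a,b) and (a,b,q) are shortest subpaths and p ⊑ q, then a ⊑ b. -/

import Mathlib

namespace ZeroExt

variable {V : Type*}

/-- The metric interval `I(x,y)` in a graph. -/
def interval (G : SimpleGraph V) (x y : V) : Set V :=
  {z | G.dist x z + G.dist z y = G.dist x y}

/-- `m` is a median of `x, y, z`. -/
def IsMedian (G : SimpleGraph V) (x y z m : V) : Prop :=
  m ∈ interval G x y ∧ m ∈ interval G y z ∧ m ∈ interval G x z

/-- A graph is modular if every triple of vertices has a median. -/
def Modular (G : SimpleGraph V) : Prop :=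
  ∀ x y z : V, ∃ m : V, IsMedian G x y z m

/-- `(a,b,c)` is a shortest subpath. -/
def ShortestTriple (G : SimpleGraph V) (a b c : V) : Prop :=
  G.dist a b + G.dist b c = G.dist a c

/-- `(a,b,c,d)` is a shortest subpath. -/
def ShortestQuad (G : SimpleGraph V) (a b c d : V) : Prop :=
  G.dist a b + G.dist b c + G.dist c d = G.dist a d

/-- `(x1,x2,x3,x4)` is an isometric rectangle. -/
def IsoRect (G : SimpleGraph V) (x1 x2 x3 x4 : V) : Prop :=
  ShortestTriple G x4 x1 x2 ∧ ShortestTriple G x1 x2 x3 ∧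
    ShortestTriple G x2 x3 x4 ∧ ShortestTriple G x3 x4 x1

/-- A set of vertices is convex if it contains the interval of each pair of its points. -/
def Convex (G : SimpleGraph V) (U : Set V) : Prop :=
  ∀ x ∈ U, ∀ y ∈ U, interval G x y ⊆ U

/-- `g` is a gate of `q` at `U`. -/
def IsGate (G : SimpleGraph V) (U : Set V) (q g : V) : Prop :=
  g ∈ U ∧ ∀ u ∈ U, G.dist q u = G.dist q g + G.dist g u

/-- A 4-cycle in a graph. -/
def IsFourCycle (G : SimpleGraph V) (x1 x2 x3 x4 : V) : Prop :=
  G.Adj x1 x2 ∧ G.Adj x2 x3 ∧ G.Adj x3 x4 ∧ G.Adj x4 x1 ∧ x1 ≠ x3 ∧ x2 ≠ x4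

/-- A modular complex: a finite connected modular graph together with an
acyclic admissible edge orientation. -/
structure ModularComplex (V : Type*) [Fintype V] where
  G : SimpleGraph V
  connected : G.Connected
  modular : Modular G
  ori : V → V → Prop
  ori_adj : ∀ {x y : V}, ori x y → G.Adj x y
  ori_total : ∀ {x y : V}, G.Adj x y → ori x y ∨ ori y x
  acyclic : ∀ {x y : V}, Relation.ReflTransGen ori x y → Relation.ReflTransGen ori y x → x = y
  admissible : ∀ {x1 x2 x3 x4 : V}, IsFourCycle G x1 x2 x3 x4 → ori x1 x2 → ori x4 x3

variable [Fintype V]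

/-- The partial order `⪯` induced by the orientation. -/
def ModularComplex.le (Γ : ModularComplex V) : V → V → Prop :=
  Relation.ReflTransGen Γ.ori

/-- The order interval `[p,q]`. -/
def ModularComplex.Icc (Γ : ModularComplex V) (p q : V) : Set V :=
  {x | Γ.le p x ∧ Γ.le x q}

/-- `m` is the greatest lower bound `p ∧ q`. -/
def ModularComplex.IsMeet (Γ : ModularComplex V) (p q m : V) : Prop :=
  Γ.le m p ∧ Γ.le m q ∧ ∀ x : V, Γ.le x p → Γ.le x q → Γ.le x m

/-- `j` is the least upper bound `p ∨ q`. -/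
def ModularComplex.IsJoin (Γ : ModularComplex V) (p q j : V) : Prop :=
  Γ.le p j ∧ Γ.le q j ∧ ∀ x : V, Γ.le p x → Γ.le q x → Γ.le j x

/-- `(p,q)` is a Boolean pair. -/
def ModularComplex.BooleanPair (Γ : ModularComplex V) (p q : V) : Prop :=
  ∃ (k : ℕ) (φ : Finset (Fin k) → V), Function.Injective φ ∧
    φ ∅ = p ∧ φ Finset.univ = q ∧
    ∀ (S : Finset (Fin k)) (i : Fin k), i ∉ S → Γ.ori (φ S) (φ (insert i S))

/-- An extended modular complex: a modular complex with an admissible relation `⊑`. -/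
structure ExtendedModularComplex (V : Type*) [Fintype V] extends ModularComplex V where
  sq : V → V → Prop
  sq_le : ∀ {p q : V}, sq p q → toModularComplex.le p q
  sq_refl : ∀ p : V, sq p p
  sq_edge : ∀ {p q : V}, ori p q → sq p q
  sq_interval : ∀ {p q a b : V}, sq p q → toModularComplex.le a b →
    a ∈ toModularComplex.Icc p q → b ∈ toModularComplex.Icc p q → sq a b
  sq_join : ∀ {p q1 q2 j : V}, sq p q1 → sq p q2 → toModularComplex.IsJoin q1 q2 j → sq p j
  sq_meet : ∀ {p1 p2 q m : V}, sq p1 q → sq p2 q → toModularComplex.IsMeet p1 p2 m → sq m q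

/-- `L^+_p = {x : p ⊑ x}`. -/
def ExtendedModularComplex.Lpos (Γ : ExtendedModularComplex V) (p : V) : Set V :=
  {x | Γ.sq p x}

/-- `L^-_p = {x : x ⊑ p}`. -/
def ExtendedModularComplex.Lneg (Γ : ExtendedModularComplex V) (p : V) : Set V :=
  {x | Γ.sq x p}

/-- `p, q` are ◇-neighbors. -/
def ExtendedModularComplex.DiamondNb (Γ : ExtendedModularComplex V) (p q : V) : Prop :=
  ∃ a b : V, Γ.sq a b ∧ p ∈ Γ.Icc a b ∧ q ∈ Γ.Icc a b

/-- The thickening `Δ(Γ)`. -/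
def ExtendedModularComplex.thick (Γ : ExtendedModularComplex V) : SimpleGraph V where
  Adj p q := p ≠ q ∧ Γ.DiamondNb p q
  symm := by
    refine ⟨?_⟩
    rintro p q ⟨hne, a, b, hab, hp, hq⟩
    exact ⟨hne.symm, a, b, hab, hq, hp⟩
  loopless := by refine ⟨?_⟩; rintro p ⟨hne, -⟩; exact hne rfl


namespace ModularComplex

variable {V : Type*} [Fintype V] (Γ : ModularComplex V)

lemma dzero {x y : V} (h : Γ.G.dist x y = 0) : x = y :=
  (Γ.connected.dist_eq_zero_iff).mp h

lemma dadj {x y : V} (h : Γ.G.Adj x y) : Γ.G.dist x y = 1 :=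
  SimpleGraph.dist_eq_one_iff_adj.mpr h

lemma adj_of_d1 {x y : V} (h : Γ.G.dist x y = 1) : Γ.G.Adj x y :=
  SimpleGraph.dist_eq_one_iff_adj.mp h

lemma dtri (x y z : V) : Γ.G.dist x z ≤ Γ.G.dist x y + Γ.G.dist y z :=
  Γ.connected.dist_triangle

lemma dcomm (x y : V) : Γ.G.dist x y = Γ.G.dist y x := SimpleGraph.dist_comm

lemma dself (x : V) : Γ.G.dist x x = 0 := SimpleGraph.dist_self

lemma le_refl (x : V) : Γ.le x x := Relation.ReflTransGen.refl

lemma le_single {x y : V} (h : Γ.ori x y) : Γ.le x y := Relation.ReflTransGen.single h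

lemma le_trans {x y z : V} (h1 : Γ.le x y) (h2 : Γ.le y z) : Γ.le x z :=
  Relation.ReflTransGen.trans h1 h2

lemma ori_asymm {x y : V} (h1 : Γ.ori x y) (h2 : Γ.ori y x) : False :=
  (Γ.ori_adj h1).ne (Γ.acyclic (Relation.ReflTransGen.single h1) (Relation.ReflTransGen.single h2))

/-- modular graphs are bipartite-like: across an edge, distances to any vertex differ by one. -/
lemma step {x y : V} (hxy : Γ.G.Adj x y) (z : V) :
    Γ.G.dist z y = Γ.G.dist z x + 1 ∨ Γ.G.dist z x = Γ.G.dist z y + 1 := by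
  obtain ⟨m, h1, h2, h3⟩ := Γ.modular x y z
  simp only [interval, Set.mem_setOf_eq] at h1 h2 h3
  rw [Γ.dadj hxy] at h1
  have hm : Γ.G.dist x m = 0 ∨ Γ.G.dist m y = 0 := by omega
  rcases hm with hm | hm
  · obtain rfl := Γ.dzero hm
    left
    have c1 := Γ.dcomm z y
    have c2 := Γ.dcomm x z
    have c3 := Γ.dadj hxy.symm
    omega
  · have hmy : m = y := (Γ.dzero hm)
    subst hmy
    right
    have c1 := Γ.dcomm x z
    have c2 := Γ.dcomm m z
    have c3 := Γ.dadj hxy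
    omega

lemma exists_mid {x y : V} (h : Γ.G.dist x y ≠ 0) :
    ∃ u, Γ.G.Adj x u ∧ Γ.G.dist u y + 1 = Γ.G.dist x y := by
  obtain ⟨p, hp⟩ := SimpleGraph.exists_walk_of_dist_ne_zero h
  cases p with
  | nil => rw [SimpleGraph.Walk.length_nil] at hp; omega
  | @cons _ u _ hadj q =>
    refine ⟨u, hadj, ?_⟩
    rw [SimpleGraph.Walk.length_cons] at hp
    have h1 : Γ.G.dist u y ≤ q.length := SimpleGraph.dist_le q
    have h2 : Γ.G.dist x y ≤ Γ.G.dist x u + Γ.G.dist u y := Γ.dtri x u y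
    have h3 := Γ.dadj hadj
    omega

/-- directed edges increase distance from any ancestor by one. -/
lemma dist_ori_succ : ∀ {z x : V}, Γ.le z x → ∀ {y : V}, Γ.ori x y →
    Γ.G.dist z y = Γ.G.dist z x + 1 := by
  intro z x hzx
  have hzx' : Relation.ReflTransGen Γ.ori z x := hzx
  clear hzx
  induction hzx' with
  | refl =>
    intro y h
    rw [SimpleGraph.dist_self, Γ.dadj (Γ.ori_adj h)]
  | @tail b c hzb hbc ih =>
    intro y hcy
    have hzc : Γ.G.dist z c = Γ.G.dist z b + 1 := ih hbc
    rcases Γ.step (Γ.ori_adj hcy) z with h | h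
    · exact h
    · exfalso
      by_cases hyb : y = b
      · subst hyb; exact Γ.ori_asymm hbc hcy
      · have hzy : Γ.G.dist z y = Γ.G.dist z b := by omega
        have hk0 : Γ.G.dist z b ≠ 0 := by
          intro h0
          exact hyb (((Γ.dzero (hzy.trans h0)).symm).trans (Γ.dzero h0))
        have hnadj : ¬ Γ.G.Adj y b := by
          intro ha
          rcases Γ.step ha z with h' | h' <;> omega
        have hyb2 : Γ.G.dist y b = 2 := by
          have t1 : Γ.G.dist y b ≤ Γ.G.dist y c + Γ.G.dist c b := Γ.dtri y c b
          have e1 : Γ.G.dist y c = 1 := by rw [Γ.dcomm]; exact Γ.dadj (Γ.ori_adj hcy)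
          have e2 : Γ.G.dist c b = 1 := by rw [Γ.dcomm]; exact Γ.dadj (Γ.ori_adj hbc)
          have n1 : Γ.G.dist y b ≠ 1 := fun h1 => hnadj (Γ.adj_of_d1 h1)
          have n0 : Γ.G.dist y b ≠ 0 := fun h0 => hyb (Γ.dzero h0)
          omega
        obtain ⟨t, m1, m2, m3⟩ := Γ.modular y b z
        simp only [interval, Set.mem_setOf_eq] at m1 m2 m3
        have cb := Γ.dcomm b z
        have cy := Γ.dcomm y z
        have cyt := Γ.dcomm y t
        have cbt := Γ.dcomm b t
        have e : Γ.G.dist y t = 1 ∧ Γ.G.dist t b = 1 ∧ Γ.G.dist t z + 1 = Γ.G.dist z b := by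
          omega
        have ctz := Γ.dcomm t z
        have c4 : IsFourCycle Γ.G c y t b := by
          refine ⟨Γ.ori_adj hcy, Γ.adj_of_d1 e.1, Γ.adj_of_d1 e.2.1, Γ.ori_adj hbc, ?_, hyb⟩
          intro hct
          rw [hct] at hzc
          omega
        have hbt : Γ.ori b t := Γ.admissible c4 hcy
        have := ih hbt
        omega

lemma dist_le_le {x y z : V} (h1 : Γ.le x y) (h2 : Γ.le y z) :
    Γ.G.dist x z = Γ.G.dist x y + Γ.G.dist y z := by
  have h2' : Relation.ReflTransGen Γ.ori y z := h2
  clear h2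
  induction h2' with
  | refl => simp [SimpleGraph.dist_self]
  | @tail b c hyb hbc ih =>
    have e1 : Γ.G.dist x c = Γ.G.dist x b + 1 := Γ.dist_ori_succ (Γ.le_trans h1 hyb) hbc
    have e2 : Γ.G.dist y c = Γ.G.dist y b + 1 := Γ.dist_ori_succ hyb hbc
    omega

lemma ori_of_adj_le {x y : V} (h : Γ.G.Adj x y) (hle : Γ.le x y) : Γ.ori x y := by
  rcases Relation.ReflTransGen.cases_head hle with h' | ⟨v, hv, hvy⟩
  · exact absurd h' h.ne
  · have e := Γ.dist_le_le (Γ.le_single hv) hvy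
    rw [Γ.dadj h, Γ.dadj (Γ.ori_adj hv)] at e
    have : v = y := Γ.dzero (by omega)
    subst this
    exact hv

/-- geodesics from `p` to `q ⪰ p` start with directed edges. -/
lemma ori_step : ∀ (k : ℕ) {p q u : V}, Γ.le p q → Γ.G.dist p q = k → Γ.G.Adj p u →
    Γ.G.dist u q + 1 = k → Γ.ori p u ∧ Γ.le u q := by
  intro k
  induction k using Nat.strong_induction_on with
  | _ k ih =>
  intro p q u hpq hd hadj hu
  have hk1 : 1 ≤ k := by omega
  have hne : p ≠ q := by
    intro h; subst h; rw [SimpleGraph.dist_self] at hd; omega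
  rcases Relation.ReflTransGen.cases_head hpq with h | ⟨v, hv, hvq⟩
  · exact absurd h hne
  · have hdv : Γ.G.dist v q + 1 = k := by
      have := Γ.dist_le_le (Γ.le_single hv) hvq
      have := Γ.dadj (Γ.ori_adj hv)
      omega
    by_cases huv : u = v
    · subst huv; exact ⟨hv, hvq⟩
    · have hk2 : 2 ≤ k := by
        rcases Nat.lt_or_ge k 2 with h' | h'
        · exfalso
          have : k = 1 := by omega
          have e1 : u = q := Γ.dzero (by omega)
          have e2 : v = q := Γ.dzero (by omega)
          exact huv (e1.trans e2.symm)
        · exact h'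
      have hnadj : ¬ Γ.G.Adj u v := by
        intro ha
        rcases Γ.step ha q with h' | h' <;>
          (first | omega | (have := Γ.dcomm q u; have := Γ.dcomm q v; omega))
      have duv : Γ.G.dist u v = 2 := by
        have t1 : Γ.G.dist u v ≤ Γ.G.dist u p + Γ.G.dist p v := Γ.dtri u p v
        have e1 : Γ.G.dist u p = 1 := by rw [Γ.dcomm]; exact Γ.dadj hadj
        have e2 : Γ.G.dist p v = 1 := Γ.dadj (Γ.ori_adj hv)
        have n1 : Γ.G.dist u v ≠ 1 := fun h1 => hnadj (Γ.adj_of_d1 h1)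
        have n0 : Γ.G.dist u v ≠ 0 := fun h0 => huv (Γ.dzero h0)
        omega
      obtain ⟨t, m1, m2, m3⟩ := Γ.modular u v q
      simp only [interval, Set.mem_setOf_eq] at m1 m2 m3
      have cvt := Γ.dcomm v t
      have cut := Γ.dcomm u t
      have e : Γ.G.dist u t = 1 ∧ Γ.G.dist v t = 1 ∧ Γ.G.dist t q + 2 = k := by omega
      obtain ⟨hvt, hletq⟩ := ih (k-1) (by omega) hvq (by omega) (Γ.adj_of_d1 e.2.1) (by omega)
      have c1 : IsFourCycle Γ.G v t u p := by
        refine ⟨Γ.adj_of_d1 e.2.1, (Γ.adj_of_d1 e.1).symm, hadj.symm, Γ.ori_adj hv, Ne.symm huv, ?_⟩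
        intro h'
        rw [h'] at e
        omega
      have hpu : Γ.ori p u := Γ.admissible c1 hvt
      have c2 : IsFourCycle Γ.G p v t u := by
        refine ⟨Γ.ori_adj hv, Γ.adj_of_d1 e.2.1, (Γ.adj_of_d1 e.1).symm, hadj.symm, ?_, Ne.symm huv⟩
        intro h'
        rw [h'] at hd
        omega
      have hut : Γ.ori u t := Γ.admissible c2 hv
      exact ⟨hpu, Γ.le_trans (Γ.le_single hut) hletq⟩

/-- vertices on geodesics between comparable pairs are between them in the order. -/
lemma le_of_interval : ∀ (s : ℕ) {p q x : V}, Γ.le p q → Γ.G.dist p x = s →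
    Γ.G.dist p x + Γ.G.dist x q = Γ.G.dist p q → Γ.le p x ∧ Γ.le x q := by
  intro s
  induction s using Nat.strong_induction_on with
  | _ s ih =>
  intro p q x hpq hs hint
  rcases Nat.eq_zero_or_pos s with h0 | hpos
  · subst h0
    obtain rfl := Γ.dzero hs
    exact ⟨Γ.le_refl p, hpq⟩
  · obtain ⟨u, hadj, hu⟩ := Γ.exists_mid (x := p) (y := x) (by omega)
    have hdu : Γ.G.dist u q + 1 = Γ.G.dist p q := by
      have t1 : Γ.G.dist u q ≤ Γ.G.dist u x + Γ.G.dist x q := Γ.dtri u x q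
      have t2 : Γ.G.dist p q ≤ Γ.G.dist p u + Γ.G.dist u q := Γ.dtri p u q
      have e1 := Γ.dadj hadj
      omega
    obtain ⟨hori, huq⟩ := Γ.ori_step (Γ.G.dist p q) hpq rfl hadj hdu
    have e1 := Γ.dadj hadj
    have hrec := ih (s-1) (by omega) (p := u) (q := q) (x := x) huq (by omega) (by omega)
    exact ⟨Γ.le_trans (Γ.le_single hori) hrec.1, hrec.2⟩

lemma le_of_mem_interval {p q x : V} (hpq : Γ.le p q)
    (h : Γ.G.dist p x + Γ.G.dist x q = Γ.G.dist p q) : Γ.le p x ∧ Γ.le x q :=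
  Γ.le_of_interval _ hpq rfl h


set_option maxHeartbeats 1600000 in
lemma core : ∀ (K : ℕ) (m a b n : V), Γ.G.Adj m a → Γ.G.Adj n b →
    Γ.G.dist m n = K → Γ.G.dist a b = K → Γ.G.dist a n = K + 1 → Γ.G.dist m b = K + 1 →
    Γ.le m n →
    (Γ.ori m a → Γ.ori n b ∧ Γ.IsJoin a n b) ∧ (Γ.ori a m → Γ.ori b n ∧ Γ.IsMeet m b a) := by
  intro K
  induction K using Nat.strong_induction_on with
  | _ K ih =>
  intro m a b n hma hnb hmn hab han hmb hlemn
  by_cases hK0 : K = 0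
  · subst hK0
    obtain rfl : m = n := Γ.dzero hmn
    obtain rfl : a = b := Γ.dzero hab
    constructor
    · intro h
      exact ⟨h, Γ.le_refl _, Γ.le_single h, fun z hz _ => hz⟩
    · intro h
      exact ⟨h, Γ.le_single h, Γ.le_refl _, fun z _ h2 => h2⟩
  by_cases hK1 : K = 1
  · subst hK1
    have hadj_mn : Γ.G.Adj m n := Γ.adj_of_d1 hmn
    have hormn : Γ.ori m n := Γ.ori_of_adj_le hadj_mn hlemn
    have hab1 : Γ.G.Adj a b := Γ.adj_of_d1 hab
    have hmb2 : m ≠ b := fun h => by rw [h, SimpleGraph.dist_self] at hmb; omega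
    have hna2 : n ≠ a := fun h => by
      rw [show a = n from h.symm, SimpleGraph.dist_self] at han; omega
    have corab : IsFourCycle Γ.G m n b a := ⟨hadj_mn, hnb, hab1.symm, hma.symm, hmb2, hna2⟩
    have horab : Γ.ori a b := Γ.admissible corab hormn
    constructor
    · intro hA
      have cy : IsFourCycle Γ.G m a b n := ⟨hma, hab1, hnb.symm, hadj_mn.symm, hmb2, hna2.symm⟩
      have hornb : Γ.ori n b := Γ.admissible cy hA
      refine ⟨hornb, Γ.le_single horab, Γ.le_single hornb, ?_⟩
      intro z haz hnz
      obtain ⟨h, h1, h2, h3⟩ := Γ.modular a b z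
      simp only [interval, Set.mem_setOf_eq] at h1 h2 h3
      rw [hab] at h1
      rcases (show Γ.G.dist h b = 0 ∨ Γ.G.dist a h = 0 by omega) with hcase | hcase
      · have hb : h = b := Γ.dzero hcase
        rw [hb] at h3
        exact (Γ.le_of_mem_interval haz h3).2
      · have ha : a = h := Γ.dzero hcase
        have ea : Γ.G.dist b z = Γ.G.dist a z + 1 := by
          rw [← ha] at h2
          have c1 := Γ.dcomm b a
          have c2 := Γ.dadj hab1
          omega
        obtain ⟨h', g1, g2, g3⟩ := Γ.modular n b z
        simp only [interval, Set.mem_setOf_eq] at g1 g2 g3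
        rw [Γ.dadj hnb] at g1
        rcases (show Γ.G.dist h' b = 0 ∨ Γ.G.dist n h' = 0 by omega) with hcase' | hcase'
        · have hb : h' = b := Γ.dzero hcase'
          rw [hb] at g3
          exact (Γ.le_of_mem_interval hnz g3).2
        · have hn : n = h' := Γ.dzero hcase'
          have en : Γ.G.dist b z = Γ.G.dist n z + 1 := by
            rw [← hn] at g2
            have c1 := Γ.dcomm b n
            have c2 := Γ.dadj hnb
            omega
          exfalso
          have hr : 1 ≤ Γ.G.dist a z := by
            rcases Nat.eq_zero_or_pos (Γ.G.dist a z) with h0 | h0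
            · exfalso
              have haz0 : a = z := Γ.dzero h0
              have hnz0 : n = z := Γ.dzero (by omega)
              have : Γ.G.dist a n = 0 := by rw [haz0, hnz0]; exact Γ.dself z
              omega
            · exact h0
          obtain ⟨g, k1, k2, k3⟩ := Γ.modular a n z
          simp only [interval, Set.mem_setOf_eq] at k1 k2 k3
          rw [han] at k1
          have hsol : Γ.G.dist a g = 1 ∧ Γ.G.dist g n = 1 ∧ Γ.G.dist g z + 1 = Γ.G.dist a z := by
            have c1 := Γ.dcomm g n
            omega
          have hleag : Γ.le a g := (Γ.le_of_mem_interval haz k3).1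
          have horag : Γ.ori a g := Γ.ori_of_adj_le (Γ.adj_of_d1 hsol.1) hleag
          have cyc : IsFourCycle Γ.G n b a g := by
            refine ⟨hnb, hab1.symm, Γ.adj_of_d1 hsol.1, Γ.adj_of_d1 hsol.2.1, hna2, ?_⟩
            intro hbg
            rw [← hbg] at hsol
            omega
          exact Γ.ori_asymm horag (Γ.admissible cyc hornb)
    · intro hB
      have cy : IsFourCycle Γ.G a m n b := ⟨hma.symm, hadj_mn, hnb, hab1.symm, hna2.symm, hmb2⟩
      have horbn : Γ.ori b n := Γ.admissible cy hB
      refine ⟨horbn, Γ.le_single hB, Γ.le_single horab, ?_⟩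
      intro z hzm hzb
      obtain ⟨h, h1, h2, h3⟩ := Γ.modular z a m
      simp only [interval, Set.mem_setOf_eq] at h1 h2 h3
      rw [show Γ.G.dist a m = 1 from Γ.dadj hma.symm] at h2
      rcases (show Γ.G.dist h a = 0 ∨ Γ.G.dist h m = 0 by have := Γ.dcomm a h; omega) with hc | hc
      · have hh : h = a := Γ.dzero hc
        rw [hh] at h3
        exact (Γ.le_of_mem_interval hzm h3).1
      · have hh : h = m := Γ.dzero hc
        have em : Γ.G.dist z a = Γ.G.dist z m + 1 := by
          rw [hh] at h1
          have c1 := Γ.dadj hma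
          omega
        obtain ⟨h', g1, g2, g3⟩ := Γ.modular z a b
        simp only [interval, Set.mem_setOf_eq] at g1 g2 g3
        rw [hab] at g2
        rcases (show Γ.G.dist h' a = 0 ∨ Γ.G.dist h' b = 0 by have := Γ.dcomm a h'; omega) with hc' | hc'
        · have hh' : h' = a := Γ.dzero hc'
          rw [hh'] at g3
          exact (Γ.le_of_mem_interval hzb g3).1
        · have hh' : h' = b := Γ.dzero hc'
          have eb : Γ.G.dist z a = Γ.G.dist z b + 1 := by
            rw [hh'] at g1
            have c1 := Γ.dcomm b a
            have c2 := Γ.dadj hab1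
            omega
          exfalso
          have hr : 1 ≤ Γ.G.dist z m := by
            rcases Nat.eq_zero_or_pos (Γ.G.dist z m) with h0 | h0
            · exfalso
              have hzm0 : z = m := Γ.dzero h0
              have hzb0 : z = b := Γ.dzero (by omega)
              have : Γ.G.dist m b = 0 := by rw [← hzm0, ← hzb0]; exact Γ.dself z
              omega
            · exact h0
          obtain ⟨g, k1, k2, k3⟩ := Γ.modular m b z
          simp only [interval, Set.mem_setOf_eq] at k1 k2 k3
          rw [hmb] at k1
          have hsol : Γ.G.dist m g = 1 ∧ Γ.G.dist g b = 1 ∧ Γ.G.dist g z + 1 = Γ.G.dist z m := by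
            have c1 := Γ.dcomm b g
            have c2 := Γ.dcomm m z
            have c3 := Γ.dcomm b z
            omega
          have hlegm : Γ.le g m :=
            (Γ.le_of_mem_interval hzm (by
              have c1 := Γ.dcomm g m
              have c2 := Γ.dcomm m z
              have c3 := Γ.dcomm g z
              omega)).2
          have horgm : Γ.ori g m :=
            Γ.ori_of_adj_le (Γ.adj_of_d1 (by rw [Γ.dcomm g m]; exact hsol.1)) hlegm
          have cyc : IsFourCycle Γ.G a b g m := by
            refine ⟨hab1, (Γ.adj_of_d1 hsol.2.1).symm,
              Γ.adj_of_d1 (by rw [Γ.dcomm g m]; exact hsol.1), hma, ?_, Ne.symm hmb2⟩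
            intro hag
            rw [← hag] at hsol
            have := Γ.dcomm a z
            omega
          exact Γ.ori_asymm horgm (Γ.admissible cyc horab)
  -- inductive step : K ≥ 2
  have hK2 : 2 ≤ K := by omega
  have hne_mn : m ≠ n := fun h => by rw [h, SimpleGraph.dist_self] at hmn; omega
  rcases Relation.ReflTransGen.cases_head hlemn with h | ⟨w1, hw1, hw1n⟩
  · exact absurd h hne_mn
  have dmw1 : Γ.G.dist m w1 = 1 := Γ.dadj (Γ.ori_adj hw1)
  have dw1n : Γ.G.dist w1 n + 1 = K := by
    have := Γ.dist_le_le (Γ.le_single hw1) hw1n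
    omega
  have hw1a : w1 ≠ a := by
    intro h
    rw [h] at dw1n
    have := Γ.dcomm a n
    omega
  have hnadj_w1a : ¬ Γ.G.Adj w1 a := by
    intro hadj
    have c1 := Γ.dcomm n w1
    have c2 := Γ.dcomm n a
    rcases Γ.step hadj n with h | h <;> omega
  have dw1a : Γ.G.dist w1 a = 2 := by
    have t1 := Γ.dtri w1 m a
    have c1 := Γ.dcomm w1 m
    have n1 : Γ.G.dist w1 a ≠ 1 := fun h => hnadj_w1a (Γ.adj_of_d1 h)
    have n0 : Γ.G.dist w1 a ≠ 0 := fun h => hw1a (Γ.dzero h)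
    have := Γ.dadj hma
    omega
  have dw1b : Γ.G.dist w1 b = K := by
    have t1 := Γ.dtri w1 n b
    have t2 := Γ.dtri m w1 b
    have := Γ.dadj hnb
    omega
  obtain ⟨x1, e1, e2, e3⟩ := Γ.modular w1 a b
  simp only [interval, Set.mem_setOf_eq] at e1 e2 e3
  rw [dw1a] at e1
  rw [hab] at e2
  rw [dw1b] at e3
  have hsol : Γ.G.dist w1 x1 = 1 ∧ Γ.G.dist x1 a = 1 ∧ Γ.G.dist x1 b + 1 = K := by
    have c1 := Γ.dcomm a x1
    omega
  have adjw1x1 : Γ.G.Adj w1 x1 := Γ.adj_of_d1 hsol.1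
  have adjx1a : Γ.G.Adj x1 a := Γ.adj_of_d1 hsol.2.1
  have dx1b : Γ.G.dist x1 b + 1 = K := hsol.2.2
  have dx1n : Γ.G.dist x1 n = K := by
    have c1 := Γ.dcomm n x1
    have c2 := Γ.dcomm n w1
    have c3 := Γ.dcomm n a
    rcases Γ.step adjw1x1 n with h | h <;> rcases Γ.step adjx1a.symm n with h' | h' <;> omega
  have hm_x1 : m ≠ x1 := by
    intro h
    rw [h] at hmb
    omega
  have c1 : IsFourCycle Γ.G m w1 x1 a := ⟨Γ.ori_adj hw1, adjw1x1, adjx1a, hma.symm, hm_x1, hw1a⟩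
  have horax1 : Γ.ori a x1 := Γ.admissible c1 hw1
  have dax1 : Γ.G.dist a x1 = 1 := by rw [Γ.dcomm]; exact hsol.2.1
  have daw1 : Γ.G.dist a w1 = 2 := by rw [Γ.dcomm]; exact dw1a
  have hnadj_mx1 : ¬ Γ.G.Adj m x1 := by
    intro hadj
    have c1 := Γ.dcomm b m
    have c2 := Γ.dcomm b x1
    rcases Γ.step hadj b with h | h <;> omega
  have dmx1 : Γ.G.dist m x1 = 2 := by
    have t1 := Γ.dtri m w1 x1
    have n1 : Γ.G.dist m x1 ≠ 1 := fun h => hnadj_mx1 (Γ.adj_of_d1 h)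
    have n0 : Γ.G.dist m x1 ≠ 0 := fun h => hm_x1 (Γ.dzero h)
    omega
  constructor
  · intro hA
    have c2 : IsFourCycle Γ.G m a x1 w1 :=
      ⟨hma, adjx1a.symm, adjw1x1.symm, (Γ.ori_adj hw1).symm, hm_x1, Ne.symm hw1a⟩
    have horw1x1 : Γ.ori w1 x1 := Γ.admissible c2 hA
    have unit := (ih 1 (by omega) m a x1 w1 hma adjw1x1 (by omega) (by omega) (by omega) (by omega)
      (Γ.le_single hw1)).1 hA
    have hrec := (ih (K-1) (by omega) w1 x1 b n adjw1x1 hnb (by omega) (by omega) (by omega)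
      (by omega) hw1n).1 horw1x1
    refine ⟨hrec.1, Γ.le_trans (Γ.le_single horax1) hrec.2.1, hrec.2.2.1, ?_⟩
    intro z haz hnz
    exact hrec.2.2.2 z (unit.2.2.2 z haz (Γ.le_trans hw1n hnz)) hnz
  · intro hB
    have c3 : IsFourCycle Γ.G a m w1 x1 :=
      ⟨hma.symm, Γ.ori_adj hw1, adjw1x1, adjx1a, Ne.symm hw1a, hm_x1⟩
    have horx1w1 : Γ.ori x1 w1 := Γ.admissible c3 hB
    have unit := (ih 1 (by omega) m a x1 w1 hma adjw1x1 (by omega) (by omega) (by omega) (by omega)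
      (Γ.le_single hw1)).2 hB
    have hrec := (ih (K-1) (by omega) w1 x1 b n adjw1x1 hnb (by omega) (by omega) (by omega)
      (by omega) hw1n).2 horx1w1
    refine ⟨hrec.1, Γ.le_single hB, Γ.le_trans (Γ.le_single horax1) hrec.2.2.1, ?_⟩
    intro z hzm hzb
    exact unit.2.2.2 z hzm (hrec.2.2.2 z (Γ.le_trans hzm (Γ.le_single hw1)) hzb)


end ModularComplex

namespace ExtendedModularComplex

variable {V : Type*} [Fintype V] (E : ExtendedModularComplex V)

lemma sq_between {p q x y : V} (h : E.sq p q) (h1 : E.toModularComplex.le p x)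
    (h2 : E.toModularComplex.le x y) (h3 : E.toModularComplex.le y q) : E.sq x y :=
  E.sq_interval h h2 ⟨h1, h2.trans h3⟩ ⟨h1.trans h2, h3⟩

lemma core_sq {m a b n : V} (hma : E.G.Adj m a) (hnb : E.G.Adj n b)
    (h1 : E.G.dist a b = E.G.dist m n) (h2 : E.G.dist a n = E.G.dist m n + 1)
    (h3 : E.G.dist m b = E.G.dist m n + 1) (hsq : E.sq m n) : E.sq a b := by
  have hlemn : E.toModularComplex.le m n := E.sq_le hsq
  have H := E.toModularComplex.core (E.G.dist m n) m a b n hma hnb rfl h1 h2 h3 hlemn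
  rcases E.ori_total hma with h | h
  · obtain ⟨hnb', hjoin⟩ := H.1 h
    have hmb : E.sq m b := E.sq_join (E.sq_edge h) hsq hjoin
    exact E.sq_between hmb (E.toModularComplex.le_single h) hjoin.1
      (E.toModularComplex.le_refl b)
  · obtain ⟨hbn, hmeet⟩ := H.2 h
    have han : E.sq a n := E.sq_meet hsq (E.sq_edge hbn) hmeet
    exact E.sq_between han (E.toModularComplex.le_refl a) hmeet.2.1
      (E.toModularComplex.le_single hbn)

set_option maxHeartbeats 1600000 in
lemma main_aux : ∀ (N : ℕ) (p q a b : V),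
    E.G.dist p a + E.G.dist b q ≤ N →
    ShortestTriple E.G p a b → ShortestTriple E.G a b q → E.sq p q → E.sq a b := by
  intro N
  induction N using Nat.strong_induction_on with
  | _ N ih =>
  intro p q a b hN h1 h2 hpq
  by_cases hab : a = b
  · subst hab
    exact E.sq_refl a
  have T1 : E.G.dist p a + E.G.dist a b = E.G.dist p b := h1
  have T2 : E.G.dist a b + E.G.dist b q = E.G.dist a q := h2
  have hlepq : E.toModularComplex.le p q := E.sq_le hpq
  have hk : 1 ≤ E.G.dist a b := by
    have : E.G.dist a b ≠ 0 := fun h => hab (E.toModularComplex.dzero h)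
    omega
  -- first median : m
  obtain ⟨m, p1, p2, p3⟩ := E.modular p a q
  simp only [interval, Set.mem_setOf_eq] at p1 p2 p3
  obtain ⟨hlepm, hlemq⟩ := E.toModularComplex.le_of_mem_interval hlepq p3
  have hsq_mq : E.sq m q := E.sq_between hpq hlepm hlemq (E.toModularComplex.le_refl q)
  have Tm : E.G.dist m a + E.G.dist a b = E.G.dist m b := by
    have t1 := E.toModularComplex.dtri m a b
    have t2 := E.toModularComplex.dtri p m b
    have c1 := E.toModularComplex.dcomm p m
    have c2 := E.toModularComplex.dcomm m a
    omega
  -- second median : n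
  obtain ⟨n, q1, q2, q3⟩ := E.modular m b q
  simp only [interval, Set.mem_setOf_eq] at q1 q2 q3
  obtain ⟨hlemn, hlenq⟩ := E.toModularComplex.le_of_mem_interval hlemq q3
  have hsq_mn : E.sq m n := E.sq_between hsq_mq (E.toModularComplex.le_refl m) hlemn hlenq
  have Tn : E.G.dist a b + E.G.dist b n = E.G.dist a n := by
    have t1 := E.toModularComplex.dtri a b n
    have t2 := E.toModularComplex.dtri a n q
    have c1 := E.toModularComplex.dcomm b n
    omega
  -- rectangle equalities
  have Emid : E.G.dist a m + E.G.dist m n = E.G.dist a n := by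
    have c1 := E.toModularComplex.dcomm m a
    have c2 := E.toModularComplex.dcomm b n
    omega
  have rect : E.G.dist m n = E.G.dist a b ∧ E.G.dist n b = E.G.dist m a := by
    have c1 := E.toModularComplex.dcomm m a
    have c2 := E.toModularComplex.dcomm b n
    omega
  rcases Nat.eq_zero_or_pos (E.G.dist m a) with hs0 | hs1
  · obtain rfl : m = a := E.toModularComplex.dzero hs0
    obtain rfl : n = b := E.toModularComplex.dzero (by omega)
    exact hsq_mn
  -- choose p' one step from m towards a
  obtain ⟨p', hadjp', hp'⟩ := E.toModularComplex.exists_mid (x := m) (y := a) (by omega)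
  have dp'b : E.G.dist p' b + 1 = E.G.dist m b := by
    have t1 := E.toModularComplex.dtri p' a b
    have t2 := E.toModularComplex.dtri m p' b
    have c1 := E.toModularComplex.dadj hadjp'
    omega
  have Tp' : E.G.dist p' a + E.G.dist a b = E.G.dist p' b := by omega
  have hmeasure : E.G.dist m a ≤ E.G.dist p a ∧ E.G.dist n b ≤ E.G.dist b q := by
    have c1 := E.toModularComplex.dcomm b n
    omega
  rcases E.toModularComplex.step hadjp' n with hfar | hnear
  · -- far case : d n p' = d n m + 1
    obtain ⟨t, r1, r2, r3⟩ := E.modular p' b n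
    simp only [interval, Set.mem_setOf_eq] at r1 r2 r3
    have hsolt : E.G.dist t n = 1 ∧ E.G.dist t b + 1 = E.G.dist m a ∧
        E.G.dist p' t = E.G.dist m n := by
      have c1 := E.toModularComplex.dcomm n p'
      have c2 := E.toModularComplex.dcomm n m
      have c3 := E.toModularComplex.dcomm b t
      have c4 := E.toModularComplex.dcomm b n
      omega
    have adjnt : E.G.Adj n t := (E.toModularComplex.adj_of_d1 hsolt.1).symm
    have dat : E.G.dist a t + 1 = E.G.dist a n := by
      have t1 := E.toModularComplex.dtri a b t
      have t2 := E.toModularComplex.dtri a t n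
      have c3 := E.toModularComplex.dcomm b t
      omega
    have Tt : E.G.dist a b + E.G.dist b t = E.G.dist a t := by
      have c3 := E.toModularComplex.dcomm b t
      omega
    rcases E.toModularComplex.step adjnt m with hfar2 | hnear2
    · -- both far : use the core lemma on (m, p', t, n)
      have hsq_p't : E.sq p' t := E.core_sq hadjp' adjnt (by omega)
        (by have c1 := E.toModularComplex.dcomm n p'; have c2 := E.toModularComplex.dcomm n m
            have c3 := E.toModularComplex.dcomm p' n; omega)
        (by have c1 := E.toModularComplex.dcomm m t; omega) hsq_mn
      exact ih (E.G.dist p' a + E.G.dist b t) (by omega) p' t a b le_rfl Tp' Tt hsq_p't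
    · -- t is inside [m,n]
      have hint : E.G.dist m t + E.G.dist t n = E.G.dist m n := by
        have c1 := E.toModularComplex.dcomm m t
        omega
      obtain ⟨hlemt, hletn⟩ := E.toModularComplex.le_of_mem_interval hlemn hint
      have hsq_mt : E.sq m t := E.sq_between hsq_mn (E.toModularComplex.le_refl m) hlemt hletn
      exact ih (E.G.dist m a + E.G.dist b t) (by omega) m t a b le_rfl Tm Tt hsq_mt
  · -- p' is inside [m,n]
    have hint : E.G.dist m p' + E.G.dist p' n = E.G.dist m n := by
      have c1 := E.toModularComplex.dadj hadjp'
      have c2 := E.toModularComplex.dcomm n p'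
      have c3 := E.toModularComplex.dcomm n m
      omega
    obtain ⟨hlemp', hlep'n⟩ := E.toModularComplex.le_of_mem_interval hlemn hint
    have hsq_p'n : E.sq p' n := E.sq_between hsq_mn hlemp' hlep'n (E.toModularComplex.le_refl n)
    have Tn' : E.G.dist a b + E.G.dist b n = E.G.dist a n := Tn
    exact ih (E.G.dist p' a + E.G.dist b n) (by
        have c2 := E.toModularComplex.dcomm b n
        omega) p' n a b le_rfl Tp' Tn' hsq_p'n

end ExtendedModularComplex

/-- If `(p,a,b)` and `(a,b,q)` are shortest subpaths and `p ⊑ q`,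
then `a ⊑ b`. -/
theorem sq_of_shortest_subpaths (Γ : ExtendedModularComplex V) (p q a b : V)
    (h1 : ShortestTriple Γ.G p a b) (h2 : ShortestTriple Γ.G a b q)
    (hpq : Γ.sq p q) : Γ.sq a b :=
  ExtendedModularComplex.main_aux Γ (Γ.G.dist p a + Γ.G.dist b q) p q a b le_rfl h1 h2 hpq

end ZeroExt
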